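/- Let w ∈ ℝ^p, c ∈ ℝ, let g(z) = c + Σ_{j=1}^p w_j z_j, and classify z as positive if g(z) > 0 and negative otherwise. Let x ∈ ℝ^p satisfy g(x) > 0 and let r, r' ∈ ℝ^p be references such that for every coordinate j, w_j (x_j − r'_j) ≥ w_j (x_j − r_j). Then for every S ⊆ {1,…,p}, g(align(x,r',S)) ≤ g(align(x,r,S)); consequently every subset S whose alignment to r is predicted negative also has its alignment to r' predicted negative, and if SEV⁻ of x with reference r is defined then SEV⁻ of x with reference r' is defined and SEV⁻(x,r') ≤ SEV⁻(x,r). That is, for a linear classifier, moving the reference coordinatewise farther from the decision boundary cannot increase SEV⁻. -/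

import Mathlib

/-- A decision tree over `ℝ^p`: each internal node is labeled by a feature index and a
threshold, each leaf by a class (`true` = positive, `false` = negative). -/
inductive DTree (p : ℕ) : Type where
  | leaf (label : Bool) : DTree p
  | node (j : Fin p) (t : ℝ) (left right : DTree p) : DTree p

namespace DTree

/-- Evaluation: at a node `(j, t)` go left if `x j ≤ t`, else right. -/
noncomputable def eval {p : ℕ} : DTree p → (Fin p → ℝ) → Bool
  | .leaf b, _ => b
  | .node j t l r, x => if x j ≤ t then l.eval x else r.eval x

/-- Subtree at a path from the root (`false` = left, `true` = right). -/
def subtreeAt {p : ℕ} : DTree p → List Bool → Option (DTree p)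
  | T, [] => some T
  | .leaf _, _ :: _ => none
  | .node _ _ l r, d :: ds => if d then r.subtreeAt ds else l.subtreeAt ds

/-- `T.follows π x` means the evaluation of `x` from the root follows the path `π`. -/
def follows {p : ℕ} : DTree p → List Bool → (Fin p → ℝ) → Prop
  | _, [], _ => True
  | .leaf _, _ :: _, _ => False
  | .node j t l r, d :: ds, x =>
      if d then ¬ x j ≤ t ∧ r.follows ds x else x j ≤ t ∧ l.follows ds x

/-- There is a leaf with label `b` at path `π`. -/
def IsLeafAt {p : ℕ} (T : DTree p) (π : List Bool) (b : Bool) : Prop :=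
  T.subtreeAt π = some (.leaf b)

/-- Region of the node at path `π`: all points whose decision path passes through it. -/
def regionAt {p : ℕ} (T : DTree p) (π : List Bool) : Set (Fin p → ℝ) :=
  {x | T.follows π x}

end DTree

/-- `align x r S` replaces the coordinates of `x` indexed by `S` with those of `r`. -/
def align {p : ℕ} (x r : Fin p → ℝ) (S : Finset (Fin p)) : Fin p → ℝ :=
  fun j => if j ∈ S then r j else x j

/-- Sparse Explanation Value (minus): minimum number of coordinates of the query `x`
that must be aligned to the reference `r` to obtain a negative prediction. -/
noncomputable def SEVminus {p : ℕ} (f : (Fin p → ℝ) → Bool) (x r : Fin p → ℝ) : ℕ :=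
  sInf {k : ℕ | ∃ S : Finset (Fin p), f (align x r S) = false ∧ S.card = k}


/-- Affine score function of a linear classifier. -/
noncomputable def linScore {p : ℕ} (w : Fin p → ℝ) (c : ℝ) (z : Fin p → ℝ) : ℝ :=
  c + ∑ j, w j * z j

/-- For a linear classifier "positive iff `g > 0`", if the reference `r'`
is coordinatewise farther from the decision boundary than `r` (in the sense
`w j * (x j − r j) ≤ w j * (x j − r' j)` for all `j`), then every alignment to `r'`
scores no higher than the corresponding alignment to `r`; hence every negatively
predicted alignment to `r` stays negative for `r'`, and `SEV⁻(x, r') ≤ SEV⁻(x, r)`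
whenever the latter is defined. -/
theorem linear_sev_monotone_in_reference
    {p : ℕ} (w : Fin p → ℝ) (c : ℝ) (x r r' : Fin p → ℝ)
    (hx : 0 < linScore w c x)
    (hfar : ∀ j, w j * (x j - r j) ≤ w j * (x j - r' j)) :
    (∀ S : Finset (Fin p), linScore w c (align x r' S) ≤ linScore w c (align x r S)) ∧
    (∀ S : Finset (Fin p),
      decide (0 < linScore w c (align x r S)) = false →
      decide (0 < linScore w c (align x r' S)) = false) ∧
    ((∃ S : Finset (Fin p), decide (0 < linScore w c (align x r S)) = false) →
      (∃ S : Finset (Fin p), decide (0 < linScore w c (align x r' S)) = false) ∧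
      SEVminus (fun z => decide (0 < linScore w c z)) x r' ≤
        SEVminus (fun z => decide (0 < linScore w c z)) x r) := by
  have h1 : ∀ S : Finset (Fin p), linScore w c (align x r' S) ≤ linScore w c (align x r S) := by
    intro S
    unfold linScore
    refine add_le_add_right (Finset.sum_le_sum fun j _ => ?_) c
    by_cases hj : j ∈ S
    · simp only [align, hj, if_true]; nlinarith [hfar j]
    · simp [align, hj]
  have h2 : ∀ S : Finset (Fin p),
      decide (0 < linScore w c (align x r S)) = false →
      decide (0 < linScore w c (align x r' S)) = false := by
    intro S hS
    simp only [decide_eq_false_iff_not, not_lt] at *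
    exact le_trans (h1 S) hS
  refine ⟨h1, h2, ?_⟩
  rintro ⟨S, hS⟩
  refine ⟨⟨S, h2 S hS⟩, ?_⟩
  have hne : {k : ℕ | ∃ S : Finset (Fin p),
      (fun z => decide (0 < linScore w c z)) (align x r S) = false ∧ S.card = k}.Nonempty :=
    ⟨S.card, S, hS, rfl⟩
  obtain ⟨T, hT, hTc⟩ := Nat.sInf_mem hne
  exact Nat.sInf_le ⟨T, h2 T hT, hTc⟩
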